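/- Let U be a unitary with U|S⟩|0⟩ = a|π⟩|0⟩ + |Γ⟩ where ‖(I ⊗ |0⟩⟨0|)|Γ⟩‖ ≤ η and (⟨π| ⊗ ⟨0|)|Γ⟩ = 0, with a = ⟨π|S⟩ ≠ 0. Then the normalized projection of U|S⟩|0⟩ onto the image of I ⊗ |0⟩⟨0| is within distance 2η/|a| of |π⟩|0⟩ (up to global phase), provided η < |a|. -/

import Mathlib

open scoped InnerProductSpace

/-- If `x = U|S⟩|0⟩ = a|π⟩|0⟩ + |Γ⟩` with `‖P Γ‖ ≤ η` and
`Γ ⊥ |π⟩|0⟩`, where `P` is the orthogonal projector onto the image of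
`I ⊗ |0⟩⟨0|` (so `P` fixes `w = |π⟩|0⟩`), then the normalized projection
`P x / ‖P x‖` is within distance `2η/|a|` of `|π⟩|0⟩` up to a global phase,
provided `η < |a|`. -/
theorem amplified_projection_close
    {H : Type*} [NormedAddCommGroup H] [InnerProductSpace ℂ H]
    (P : H →ₗ[ℂ] H)
    (hPidem : P ∘ₗ P = P)
    (hPsa : ∀ u v : H, ⟪P u, v⟫_ℂ = ⟪u, P v⟫_ℂ)
    (w Γ x : H) (a : ℂ) (η : ℝ)
    (hw : ‖w‖ = 1) (hPw : P w = w)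
    (hx : x = a • w + Γ) (hxnorm : ‖x‖ = 1)
    (horth : ⟪w, Γ⟫_ℂ = 0)
    (hPΓ : ‖P Γ‖ ≤ η) (hη : 0 ≤ η)
    (ha : a ≠ 0) (hηa : η < ‖a‖) :
    ∃ c : ℂ, ‖c‖ = 1 ∧ ‖(‖P x‖)⁻¹ • P x - c • w‖ ≤ 2 * η / ‖a‖ := by
  have ha0 : (0:ℝ) < ‖a‖ := norm_pos_iff.mpr ha
  have hPx : P x = a • w + P Γ := by rw [hx, map_add, map_smul, hPw]
  have hwPΓ : ⟪w, P Γ⟫_ℂ = 0 := by rw [← hPsa, hPw, horth]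
  have hip : ⟪a • w, P Γ⟫_ℂ = 0 := by rw [inner_smul_left, hwPΓ, mul_zero]
  have haw : ‖a • w‖ = ‖a‖ := by rw [norm_smul, hw, mul_one]
  set t := ‖P x‖ with ht
  have hpyth : t ^ 2 = ‖a‖ ^ 2 + ‖P Γ‖ ^ 2 := by
    have h := norm_add_sq_eq_norm_sq_add_norm_sq_of_inner_eq_zero _ _ hip
    rw [haw] at h
    rw [ht, hPx]; nlinarith [h]
  have htge : ‖a‖ ≤ t := by nlinarith [norm_nonneg (P x), norm_nonneg (P Γ)]
  have ht0 : (0:ℝ) < t := lt_of_lt_of_le ha0 htge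
  have htle : t ≤ ‖a‖ + η := by
    calc t ≤ ‖a • w‖ + ‖P Γ‖ := by rw [ht, hPx]; exact norm_add_le _ _
    _ ≤ ‖a‖ + η := by rw [haw]; linarith
  refine ⟨a / ‖a‖, ?_, ?_⟩
  · rw [norm_div, Complex.norm_real, Real.norm_eq_abs, abs_of_pos ha0, div_self ha0.ne']
  · have hdecomp : (t:ℝ)⁻¹ • P x - (a / ‖a‖) • w
        = ((t:ℂ)⁻¹ * a - a / ‖a‖) • w + (t:ℝ)⁻¹ • P Γ := by
      rw [hPx]
      push_cast
      rw [← Complex.coe_smul, ← Complex.coe_smul]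
      push_cast
      module
    rw [hdecomp]
    have h1 : ‖((t:ℂ)⁻¹ * a - a / ‖a‖) • w‖ = (t - ‖a‖) / t := by
      rw [norm_smul, hw, mul_one]
      have : (t:ℂ)⁻¹ * a - a / ‖a‖ = a * ((t:ℂ)⁻¹ - (‖a‖:ℂ)⁻¹) := by
        field_simp
      rw [this, norm_mul]
      have : ((t:ℂ)⁻¹ - (‖a‖:ℂ)⁻¹) = ((t⁻¹ - ‖a‖⁻¹ : ℝ) : ℂ) := by push_cast; ring
      rw [this, Complex.norm_real, Real.norm_eq_abs,
        abs_of_nonpos (sub_nonpos.mpr (inv_anti₀ ha0 htge))]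
      have hA : ‖a‖ ≠ 0 := ha0.ne'
      field_simp
      ring
    have h2 : ‖(t:ℝ)⁻¹ • P Γ‖ ≤ η / t := by
      rw [norm_smul, norm_inv, Real.norm_eq_abs, abs_of_pos ht0]
      rw [inv_mul_eq_div]
      gcongr
    calc ‖((t:ℂ)⁻¹ * a - a / ‖a‖) • w + (t:ℝ)⁻¹ • P Γ‖
        ≤ (t - ‖a‖) / t + η / t := by
          rw [← h1]; exact (norm_add_le _ _).trans (by gcongr)
      _ ≤ 2 * η / ‖a‖ := by
          rw [← add_div, div_le_div_iff₀ ht0 ha0]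
          nlinarith
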